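/- Let (A, B) be a cyclically monotone pair with respect to (ω, τ), with a, a_1, ..., a_k ∈ A and b, b_1, ..., b_k ∈ B. If b_1, ..., b_k are selfadjoint, then for every m ≥ 1, ω((∑_{i=1}^k a_i b_i a_i^*)^m) = ω((∑_{i=1}^k τ(b_i) a_i a_i^*)^m). -/
import Mathlib

/-- Cyclic monotone independence of a pair of sets `SA`, `SB` with respect to `(ω, τ)`. -/
def CyclicMonotone {C : Type*} [Ring C] [Algebra ℂ C]
    (ω τ : C →ₗ[ℂ] ℂ) (SA SB : Set C) : Prop :=
  ∀ (xs ys : List C), xs.length = ys.length →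
    (∀ x ∈ xs, x ∈ SA) → (∀ y ∈ ys, y ∈ SB) →
    ω (List.zipWith (· * ·) xs ys).prod = ω xs.prod * (ys.map τ).prod

theorem stmt_2 {C : Type*} [Ring C] [Algebra ℂ C] [StarRing C] [StarModule ℂ C]
    (ω τ : C →ₗ[ℂ] ℂ)
    (hτ1 : τ 1 = 1) (hτtr : ∀ x y : C, τ (x * y) = τ (y * x))
    (hωtr : ∀ x y : C, ω (x * y) = ω (y * x))
    (hωsa : ∀ x : C, ω (star x) = starRingEnd ℂ (ω x))
    (SA SB : Set C) (h1B : (1 : C) ∈ SB)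
    (hSAstar : ∀ x ∈ SA, star x ∈ SA) (hSBstar : ∀ y ∈ SB, star y ∈ SB)
    (hcm : CyclicMonotone ω τ SA SB)
    (k : ℕ) (a b : Fin k → C)
    (ha : ∀ i, a i ∈ SA) (hb : ∀ i, b i ∈ SB)
    (hbsa : ∀ i, star (b i) = b i) :
    ∀ m : ℕ, 1 ≤ m →
      ω ((∑ i, a i * b i * star (a i)) ^ m) =
        ω ((∑ i, τ (b i) • (a i * star (a i))) ^ m) := by
  -- key lemma from cyclic monotonicity
  have key : ∀ l : List (Fin k),
      ω ((l.map fun i => a i * b i * star (a i)).prod) =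
        ((l.map fun i => τ (b i)).prod) * ω ((l.map fun i => a i * star (a i)).prod) := by
    intro l
    have e1 : ∀ l : List (Fin k),
        (List.zipWith (· * ·) (l.flatMap fun i => [a i, star (a i)])
            (l.flatMap fun i => [b i, (1 : C)])).prod =
          (l.map fun i => a i * b i * star (a i)).prod := by
      intro l
      induction l with
      | nil => simp
      | cons i t ih => simp only [List.flatMap_cons, List.map_cons]; simp [List.prod_cons, mul_assoc, ih]
    have e2 : ∀ l : List (Fin k),
        (l.flatMap fun i => [a i, star (a i)]).prod = (l.map fun i => a i * star (a i)).prod := by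
      intro l
      induction l with
      | nil => simp
      | cons i t ih => simp only [List.flatMap_cons, List.map_cons]; simp [List.prod_cons, mul_assoc, ih]
    have e3 : ∀ l : List (Fin k),
        ((l.flatMap fun i => [b i, (1 : C)]).map τ).prod = (l.map fun i => τ (b i)).prod := by
      intro l
      induction l with
      | nil => simp
      | cons i t ih => simp only [List.flatMap_cons, List.map_cons]; simp [List.prod_cons, hτ1, ih]
    set xs := l.flatMap (fun i => [a i, star (a i)]) with hxs
    set ys := l.flatMap (fun i => [b i, (1 : C)]) with hys
    have hlen : xs.length = ys.length := by
      simp [hxs, hys, Function.comp_def]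
    have hx : ∀ x ∈ xs, x ∈ SA := by
      intro x hxmem
      simp only [hxs, List.mem_flatMap, List.mem_cons, List.mem_singleton,
        List.not_mem_nil, or_false] at hxmem
      obtain ⟨i, _, h | h⟩ := hxmem
      · exact h ▸ ha i
      · exact h ▸ hSAstar _ (ha i)
    have hy : ∀ y ∈ ys, y ∈ SB := by
      intro y hymem
      simp only [hys, List.mem_flatMap, List.mem_cons, List.mem_singleton,
        List.not_mem_nil, or_false] at hymem
      obtain ⟨i, _, h | h⟩ := hymem
      · exact h ▸ hb i
      · exact h ▸ h1B
    rw [← e1 l, hcm xs ys hlen hx hy, e2 l, e3 l, mul_comm]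
  -- generalized induction
  have main : ∀ m : ℕ, ∀ l : List (Fin k),
      ω ((l.map fun i => a i * b i * star (a i)).prod * (∑ i, a i * b i * star (a i)) ^ m) =
        ((l.map fun i => τ (b i)).prod) *
          ω ((l.map fun i => a i * star (a i)).prod * (∑ i, τ (b i) • (a i * star (a i))) ^ m) := by
    intro m
    induction m with
    | zero => intro l; simpa using key l
    | succ n ih =>
      intro l
      rw [pow_succ', pow_succ']
      have lhs_eq : (l.map fun i => a i * b i * star (a i)).prod *
          ((∑ i, a i * b i * star (a i)) * (∑ i, a i * b i * star (a i)) ^ n) =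
          ∑ i, ((l ++ [i]).map fun i => a i * b i * star (a i)).prod *
            (∑ i, a i * b i * star (a i)) ^ n := by
        rw [Finset.sum_mul, Finset.mul_sum]
        refine Finset.sum_congr rfl fun i _ => ?_
        simp [List.prod_append, mul_assoc]
      have rhs_eq : (l.map fun i => a i * star (a i)).prod *
          ((∑ i, τ (b i) • (a i * star (a i))) * (∑ i, τ (b i) • (a i * star (a i))) ^ n) =
          ∑ i, τ (b i) • (((l ++ [i]).map fun i => a i * star (a i)).prod *
            (∑ i, τ (b i) • (a i * star (a i))) ^ n) := by
        rw [Finset.sum_mul, Finset.mul_sum]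
        refine Finset.sum_congr rfl fun i _ => ?_
        simp [List.prod_append, mul_assoc, smul_mul_assoc, mul_smul_comm]
      rw [lhs_eq, rhs_eq, map_sum, map_sum]
      rw [Finset.mul_sum]
      refine Finset.sum_congr rfl fun i _ => ?_
      rw [ih (l ++ [i])]
      simp only [List.map_append, List.prod_append, List.map_cons, List.map_nil,
        List.prod_cons, List.prod_nil, mul_one, map_smul, smul_eq_mul]
      ring
  intro m _
  simpa using main m []
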